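/- Let q₁ > q₂ ≥ 3 and let E₁, E₂ be two q₁-term arithmetic progressions with distinct common differences, each intersecting a fixed q₂-element set E in exactly one (distinct) element. Then |E ∪ E₁ ∪ E₂| ≥ q₁ + ⌊q₁/2⌋ + q₂ - 2. -/

import Mathlib

lemma ap_core (q : ℕ) (a₁ a₂ d₁ d₂ : ℤ) (hd₁ : 1 ≤ d₁) (hlt : d₁ < d₂) :
    (((Finset.range q).image (fun i : ℕ => a₁ + (i : ℤ) * d₁)) ∩
      ((Finset.range q).image (fun i : ℕ => a₂ + (i : ℤ) * d₂))).card ≤ (q + 1) / 2 := by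
  classical
  have hd₁0 : d₁ ≠ 0 := by omega
  have key : ∀ x ∈ ((Finset.range q).image (fun i : ℕ => a₁ + (i : ℤ) * d₁)) ∩
      ((Finset.range q).image (fun i : ℕ => a₂ + (i : ℤ) * d₂)),
      ∃ i k : ℕ, i < q ∧ x = a₁ + (i : ℤ) * d₁ ∧ x = a₂ + (k : ℤ) * d₂ ∧
        ((x - a₁) / d₁).toNat = i := by
    intro x hx
    rw [Finset.mem_inter, Finset.mem_image, Finset.mem_image] at hx
    obtain ⟨⟨i, hi, hxi⟩, ⟨k, hk, hxk⟩⟩ := hx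
    refine ⟨i, k, Finset.mem_range.mp hi, hxi.symm, hxk.symm, ?_⟩
    rw [← hxi, add_sub_cancel_left, Int.mul_ediv_cancel _ hd₁0, Int.toNat_natCast]
  rw [← Finset.card_range ((q + 1) / 2)]
  apply Finset.card_le_card_of_injOn (fun x => ((x - a₁) / d₁).toNat / 2)
  · intro x hx
    obtain ⟨i, k, hi, hxi, hxk, hfi⟩ := key x hx
    simp only [Finset.coe_range, Set.mem_Iio, Finset.mem_coe, Finset.mem_range, hfi]
    omega
  · intro x hx y hy hf
    obtain ⟨i, k, hi, hxi, hxk, hfi⟩ := key x hx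
    obtain ⟨j, l, hj, hyj, hyl, hfj⟩ := key y hy
    simp only [hfi, hfj] at hf
    by_contra hne
    have hij : i ≠ j := by
      intro h; apply hne; rw [hxi, hyj, h]
    have h1 : ((i : ℤ) - j) * d₁ = ((k : ℤ) - l) * d₂ := by
      have : x - y = ((i : ℤ) - j) * d₁ := by rw [hxi, hyj]; ring
      have h2 : x - y = ((k : ℤ) - l) * d₂ := by rw [hxk, hyl]; ring
      omega
    set m : ℤ := (k : ℤ) - l with hm
    have habs : (i : ℤ) - j = 1 ∨ (i : ℤ) - j = -1 := by omega
    have hd1eq : d₁ = m * d₂ ∨ -d₁ = m * d₂ := by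
      rcases habs with h | h <;> [left; right] <;> rw [← h1, h] <;> ring
    have hm3 : m = 0 ∨ 1 ≤ m ∨ m ≤ -1 := by omega
    rcases hm3 with h | h | h
    · rcases hd1eq with he | he <;> rw [h, zero_mul] at he <;> omega
    · have : d₂ * 1 ≤ d₂ * m := by
        apply mul_le_mul_of_nonneg_left h (by omega)
      rcases hd1eq with he | he <;> nlinarith
    · have : d₂ * m ≤ d₂ * (-1) := by
        apply mul_le_mul_of_nonneg_left h (by omega)
      rcases hd1eq with he | he <;> nlinarith

lemma ap_inter_card (q : ℕ) (a₁ a₂ d₁ d₂ : ℤ) (hd₁ : 1 ≤ d₁) (hd₂ : 1 ≤ d₂) (hdd : d₁ ≠ d₂) :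
    (((Finset.range q).image (fun i : ℕ => a₁ + (i : ℤ) * d₁)) ∩
      ((Finset.range q).image (fun i : ℕ => a₂ + (i : ℤ) * d₂))).card ≤ (q + 1) / 2 := by
  rcases lt_or_gt_of_ne hdd with h | h
  · exact ap_core q a₁ a₂ d₁ d₂ hd₁ h
  · rw [Finset.inter_comm]
    exact ap_core q a₂ a₁ d₂ d₁ hd₂ h

/-- Let `q₁ > q₂ ≥ 3` and let `E₁, E₂` be two `q₁`-term arithmetic progressions with
distinct common differences `d₁, d₂ ≥ 1`, each intersecting a fixed `q₂`-element set `E`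
in exactly one element, these elements being distinct. Then
`|E ∪ E₁ ∪ E₂| ≥ q₁ + ⌊q₁/2⌋ + q₂ - 2`. -/
theorem distinct_difference_cover_union (q₁ q₂ : ℕ) (hq₂ : 3 ≤ q₂) (h12 : q₂ < q₁)
    (a₁ a₂ d₁ d₂ : ℤ) (hd₁ : 1 ≤ d₁) (hd₂ : 1 ≤ d₂) (hdd : d₁ ≠ d₂)
    (E : Finset ℤ) (hE : E.card = q₂)
    (E₁ E₂ : Finset ℤ)
    (hE₁ : E₁ = (Finset.range q₁).image (fun i : ℕ => a₁ + (i : ℤ) * d₁))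
    (hE₂ : E₂ = (Finset.range q₁).image (fun i : ℕ => a₂ + (i : ℤ) * d₂))
    (v₁ v₂ : ℤ) (hv : v₁ ≠ v₂)
    (hv₁ : E₁ ∩ E = {v₁}) (hv₂ : E₂ ∩ E = {v₂}) :
    q₁ + q₁ / 2 + q₂ - 2 ≤ (E ∪ E₁ ∪ E₂).card := by
  classical
  have hcard₁ : E₁.card = q₁ := by
    rw [hE₁, Finset.card_image_of_injective _ ?_, Finset.card_range]
    intro i j h
    have : (i : ℤ) * d₁ = (j : ℤ) * d₁ := add_left_cancel h
    have : (i : ℤ) = j := mul_right_cancel₀ (by omega) this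
    exact_mod_cast this
  have hcard₂ : E₂.card = q₁ := by
    rw [hE₂, Finset.card_image_of_injective _ ?_, Finset.card_range]
    intro i j h
    have : (i : ℤ) * d₂ = (j : ℤ) * d₂ := add_left_cancel h
    have : (i : ℤ) = j := mul_right_cancel₀ (by omega) this
    exact_mod_cast this
  have hi12 : (E₁ ∩ E₂).card ≤ (q₁ + 1) / 2 := by
    rw [hE₁, hE₂]; exact ap_inter_card q₁ a₁ a₂ d₁ d₂ hd₁ hd₂ hdd
  have hEE₁ : (E₁ ∩ E).card = 1 := by rw [hv₁, Finset.card_singleton]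
  have hEE₂ : (E₂ ∩ E).card = 1 := by rw [hv₂, Finset.card_singleton]
  have h1 : (E ∪ E₁).card + (E ∩ E₁).card = E.card + E₁.card :=
    Finset.card_union_add_card_inter E E₁
  have h2 : ((E ∪ E₁) ∪ E₂).card + ((E ∪ E₁) ∩ E₂).card = (E ∪ E₁).card + E₂.card :=
    Finset.card_union_add_card_inter (E ∪ E₁) E₂
  have h3 : ((E ∪ E₁) ∩ E₂).card ≤ (E ∩ E₂).card + (E₁ ∩ E₂).card := by
    rw [Finset.union_inter_distrib_right]
    exact Finset.card_union_le _ _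
  have h4 : (E ∩ E₁).card = 1 := by rw [Finset.inter_comm]; exact hEE₁
  have h5 : (E ∩ E₂).card = 1 := by rw [Finset.inter_comm]; exact hEE₂
  rw [Finset.union_assoc] at h2 ⊢
  omega
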